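/- arXiv:2501.10887 — 2 statements merged into one kernel-verified Lean document; each statement's English description precedes it below -/
import Mathlib

section
/- A linear map d : V → V is a derivation of the Leibniz algebra L₁₉ if and only if there exist complex numbers a, b, m, p, q, r, s such that d(e₁) = a·e₁ + p·e₃ + q·e₄, d(e₂) = m·e₁ + b·e₂ + r·e₃ + s·e₄, d(e₃) = 2b·e₃ + m·e₄, and d(e₄) = (a+b)·e₄. Consequently, the space of derivations of L₁₉ is a 7-dimensional linear subspace of End(V). -/
/-- `V = ℂ⁴`. -/
abbrev V : Type := Fin 4 → ℂ

/-- standard basis: `e 0 = e₁`, ..., `e 3 = e₄`. -/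
def e (i : Fin 4) : V := Pi.single i 1

/-- Bracket of the Leibniz algebra `L₁₉`:
`⟦e₂,e₁⟧ = e₄`, `⟦e₂,e₂⟧ = e₃`, all other basis products zero. -/
def br (x y : V) : V :=
  (x 1 * y 1) • e 2 + (x 1 * y 0) • e 3

/-- A derivation. -/
def IsDer (d : V →ₗ[ℂ] V) : Prop :=
  ∀ x y : V, d (br x y) = br (d x) y + br x (d y)

lemma e_apply (i j : Fin 4) : e i j = if j = i then 1 else 0 := by
  simp [e, Pi.single_apply]

lemma expand (x : V) : x = x 0 • e 0 + x 1 • e 1 + x 2 • e 2 + x 3 • e 3 := by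
  funext i; fin_cases i <;> simp [e_apply]

lemma d_apply (d : V →ₗ[ℂ] V) (x : V) :
    d x = x 0 • d (e 0) + x 1 • d (e 1) + x 2 • d (e 2) + x 3 • d (e 3) := by
  conv_lhs => rw [expand x]
  simp [map_add, map_smul]

lemma der_iff (d : V →ₗ[ℂ] V) : IsDer d ↔ ∃ a b m p q r s : ℂ,
    d (e 0) = a • e 0 + p • e 2 + q • e 3 ∧
    d (e 1) = m • e 0 + b • e 1 + r • e 2 + s • e 3 ∧
    d (e 2) = (2 * b) • e 2 + m • e 3 ∧
    d (e 3) = (a + b) • e 3 := by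
  constructor
  · intro hd
    have hbr11 : br (e 1) (e 1) = e 2 := by funext i; simp [br, e_apply]
    have hbr10 : br (e 1) (e 0) = e 3 := by funext i; simp [br, e_apply]
    have hbr01 : br (e 0) (e 1) = 0 := by funext i; simp [br, e_apply]
    have h01 := hd (e 0) (e 1)
    rw [hbr01, map_zero] at h01
    have key : d (e 0) 1 = 0 := by
      have := congrFun h01 2
      simp [br, e_apply] at this
      exact this.symm
    have h11 := hd (e 1) (e 1)
    rw [hbr11] at h11
    have h10 := hd (e 1) (e 0)
    rw [hbr10] at h10
    refine ⟨d (e 0) 0, d (e 1) 1, d (e 1) 0, d (e 0) 2, d (e 0) 3, d (e 1) 2, d (e 1) 3,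
      ?_, ?_, ?_, ?_⟩
    · funext i; fin_cases i <;> simp [e_apply, key]
    · funext i; fin_cases i <;> simp [e_apply]
    · funext i
      have := congrFun h11 i
      simp [br, e_apply] at this
      fin_cases i <;> simp [e_apply] <;> simp at this <;> linear_combination this
    · funext i
      have := congrFun h10 i
      simp [br, e_apply, key] at this
      fin_cases i <;> simp [e_apply] <;> simp [key] at this <;> linear_combination this
  · rintro ⟨a, b, m, p, q, r, s, h0, h1, h2, h3⟩
    intro x y
    have dx0 : ∀ z : V, d z 0 = a * z 0 + m * z 1 := by
      intro z
      rw [d_apply d z, h0, h1, h2, h3]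
      simp [e_apply]; ring
    have dx1 : ∀ z : V, d z 1 = b * z 1 := by
      intro z
      rw [d_apply d z, h0, h1, h2, h3]
      simp [e_apply]; ring
    funext i
    fin_cases i <;>
      simp [br, map_add, map_smul, h2, h3, dx0, dx1, e_apply] <;> ring

lemma br_add_left (u v y : V) : br (u + v) y = br u y + br v y := by
  funext i; simp [br, Pi.smul_apply, smul_eq_mul]; ring

lemma br_add_right (x u v : V) : br x (u + v) = br x u + br x v := by
  funext i; simp [br, Pi.smul_apply, smul_eq_mul]; ring

lemma br_smul_left (c : ℂ) (u y : V) : br (c • u) y = c • br u y := by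
  funext i; simp [br, Pi.smul_apply, smul_eq_mul]; ring

lemma br_smul_right (c : ℂ) (x u : V) : br x (c • u) = c • br x u := by
  funext i; simp [br, Pi.smul_apply, smul_eq_mul]; ring

noncomputable def derS : Submodule ℂ (V →ₗ[ℂ] V) where
  carrier := {d | IsDer d}
  zero_mem' := by intro x y; simp [br]
  add_mem' := by
    intro f g hf hg x y
    simp only [LinearMap.add_apply, hf x y, hg x y, br_add_left, br_add_right]
    abel
  smul_mem' := by
    intro c f hf x y
    simp only [LinearMap.smul_apply, hf x y, br_smul_left, br_smul_right, smul_add]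

noncomputable def coords : (V →ₗ[ℂ] V) →ₗ[ℂ] (Fin 7 → ℂ) where
  toFun d := ![d (e 0) 0, d (e 1) 1, d (e 1) 0, d (e 0) 2, d (e 0) 3, d (e 1) 2, d (e 1) 3]
  map_add' f g := by funext i; fin_cases i <;> rfl
  map_smul' c f := by funext i; fin_cases i <;> rfl

noncomputable def Dmk (a b m p q r s : ℂ) : V →ₗ[ℂ] V :=
  Matrix.toLin' !![a, m, 0, 0; (0:ℂ), b, 0, 0; p, r, 2*b, 0; q, s, m, a+b]

lemma Dmk_apply (a b m p q r s : ℂ) :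
    Dmk a b m p q r s (e 0) = a • e 0 + p • e 2 + q • e 3 ∧
    Dmk a b m p q r s (e 1) = m • e 0 + b • e 1 + r • e 2 + s • e 3 ∧
    Dmk a b m p q r s (e 2) = (2 * b) • e 2 + m • e 3 ∧
    Dmk a b m p q r s (e 3) = (a + b) • e 3 := by
  refine ⟨?_, ?_, ?_, ?_⟩ <;>
  · funext i
    simp only [Dmk, show ∀ j : Fin 4, e j = Pi.single j 1 from fun _ => rfl,
      Matrix.toLin'_apply, Matrix.mulVec_single]
    fin_cases i <;> simp [Pi.single_apply]

lemma der_values (d : V →ₗ[ℂ] V) (hd : IsDer d) :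
    d (e 0) = (d (e 0) 0) • e 0 + (d (e 0) 2) • e 2 + (d (e 0) 3) • e 3 ∧
    d (e 1) = (d (e 1) 0) • e 0 + (d (e 1) 1) • e 1 + (d (e 1) 2) • e 2 + (d (e 1) 3) • e 3 ∧
    d (e 2) = (2 * d (e 1) 1) • e 2 + (d (e 1) 0) • e 3 ∧
    d (e 3) = (d (e 0) 0 + d (e 1) 1) • e 3 := by
  obtain ⟨a, b, m, p, q, r, s, h0, h1, h2, h3⟩ := (der_iff d).1 hd
  have ha : d (e 0) 0 = a := by rw [h0]; simp [e_apply]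
  have hp : d (e 0) 2 = p := by rw [h0]; simp [e_apply]
  have hq : d (e 0) 3 = q := by rw [h0]; simp [e_apply]
  have hm : d (e 1) 0 = m := by rw [h1]; simp [e_apply]
  have hb : d (e 1) 1 = b := by rw [h1]; simp [e_apply]
  have hr : d (e 1) 2 = r := by rw [h1]; simp [e_apply]
  have hs : d (e 1) 3 = s := by rw [h1]; simp [e_apply]
  rw [ha, hp, hq, hm, hb, hr, hs]
  exact ⟨h0, h1, h2, h3⟩

lemma finrank_derS : Module.finrank ℂ derS = 7 := by
  let f : derS →ₗ[ℂ] (Fin 7 → ℂ) := coords.comp derS.subtype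
  have hinj : Function.Injective f := by
    intro u v huv
    have h7 : ∀ j : Fin 7, coords u.1 j = coords v.1 j := fun j => congrFun huv j
    have c0 : u.1 (e 0) 0 = v.1 (e 0) 0 := h7 0
    have c1 : u.1 (e 1) 1 = v.1 (e 1) 1 := h7 1
    have c2 : u.1 (e 1) 0 = v.1 (e 1) 0 := h7 2
    have c3 : u.1 (e 0) 2 = v.1 (e 0) 2 := h7 3
    have c4 : u.1 (e 0) 3 = v.1 (e 0) 3 := h7 4
    have c5 : u.1 (e 1) 2 = v.1 (e 1) 2 := h7 5
    have c6 : u.1 (e 1) 3 = v.1 (e 1) 3 := h7 6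
    obtain ⟨u0, u1, u2, u3⟩ := der_values u.1 u.2
    obtain ⟨v0, v1, v2, v3⟩ := der_values v.1 v.2
    apply Subtype.ext
    apply LinearMap.ext
    intro x
    rw [d_apply u.1 x, d_apply v.1 x, u0, u1, u2, u3, v0, v1, v2, v3,
      c0, c1, c2, c3, c4, c5, c6]
  have hsurj : Function.Surjective f := by
    intro c
    obtain ⟨h0, h1, h2, h3⟩ := Dmk_apply (c 0) (c 1) (c 2) (c 3) (c 4) (c 5) (c 6)
    refine ⟨⟨Dmk (c 0) (c 1) (c 2) (c 3) (c 4) (c 5) (c 6),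
      (der_iff _).2 ⟨c 0, c 1, c 2, c 3, c 4, c 5, c 6, h0, h1, h2, h3⟩⟩, ?_⟩
    set D := Dmk (c 0) (c 1) (c 2) (c 3) (c 4) (c 5) (c 6) with hD
    have k0 : D (e 0) 0 = c 0 := by rw [h0]; simp [e_apply]
    have k1 : D (e 1) 1 = c 1 := by rw [h1]; simp [e_apply]
    have k2 : D (e 1) 0 = c 2 := by rw [h1]; simp [e_apply]
    have k3 : D (e 0) 2 = c 3 := by rw [h0]; simp [e_apply]
    have k4 : D (e 0) 3 = c 4 := by rw [h0]; simp [e_apply]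
    have k5 : D (e 1) 2 = c 5 := by rw [h1]; simp [e_apply]
    have k6 : D (e 1) 3 = c 6 := by rw [h1]; simp [e_apply]
    funext j
    fin_cases j
    · exact k0
    · exact k1
    · exact k2
    · exact k3
    · exact k4
    · exact k5
    · exact k6
  exact ((LinearEquiv.ofBijective f ⟨hinj, hsurj⟩).finrank_eq).trans (Module.finrank_fin_fun ℂ)

theorem derivations_of_L19 :
    (∀ d : V →ₗ[ℂ] V, IsDer d ↔ ∃ a b m p q r s : ℂ,
      d (e 0) = a • e 0 + p • e 2 + q • e 3 ∧
      d (e 1) = m • e 0 + b • e 1 + r • e 2 + s • e 3 ∧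
      d (e 2) = (2 * b) • e 2 + m • e 3 ∧
      d (e 3) = (a + b) • e 3) ∧
    ∃ S : Submodule ℂ (V →ₗ[ℂ] V),
      (S : Set (V →ₗ[ℂ] V)) = {d | IsDer d} ∧ Module.finrank ℂ S = 7 := by
  exact ⟨der_iff, derS, rfl, finrank_derS⟩
end

section
/- A linear map D : V → V is an antiderivation of the Leibniz algebra L₁₉ if and only if D(e₁) lies in the span of e₃ and e₄, D(e₂) is an arbitrary vector of V, and D(e₃) = D(e₄) = 0. Consequently, the space of antiderivations of L₁₉ is a 6-dimensional linear subspace of End(V). -/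
/-- An antiderivation. -/
def IsAntiDer (D : V →ₗ[ℂ] V) : Prop :=
  ∀ x y : V, D (br x y) = br x (D y) - br y (D x)

lemma decompV (v : V) : v = v 0 • e 0 + v 1 • e 1 + v 2 • e 2 + v 3 • e 3 := by
  funext i
  fin_cases i <;> simp [e, Pi.single_apply]

lemma key (D : V →ₗ[ℂ] V) :
    IsAntiDer D ↔ (D (e 0) 0 = 0 ∧ D (e 0) 1 = 0 ∧ D (e 2) = 0 ∧ D (e 3) = 0) := by
  constructor
  · intro h
    have h11 := h (e 1) (e 1)
    have h01 := h (e 0) (e 1)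
    have h10 := h (e 1) (e 0)
    have hb11 : br (e 1) (e 1) = e 2 := by
      funext i; simp [br, e, Pi.single_apply]
    have hb01 : br (e 0) (e 1) = 0 := by
      funext i; simp [br, e, Pi.single_apply]
    have hb10 : br (e 1) (e 0) = e 3 := by
      funext i; simp [br, e, Pi.single_apply]
    rw [hb11] at h11
    rw [hb01] at h01
    rw [hb10] at h10
    have hDe2 : D (e 2) = 0 := by rw [h11]; abel
    have h01' : (0 : V) = - br (e 1) (D (e 0)) := by
      rw [map_zero] at h01
      rw [h01]
      have : br (e 0) (D (e 1)) = 0 := by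
        funext i; simp [br, e, Pi.single_apply]
      rw [this]; abel
    have c1 : D (e 0) 1 = 0 := by
      have := congrFun h01' 2
      simpa [br, e, Pi.single_apply] using this
    have c0 : D (e 0) 0 = 0 := by
      have := congrFun h01' 3
      simpa [br, e, Pi.single_apply] using this
    have hDe3 : D (e 3) = 0 := by
      rw [h10]
      have hb : br (e 0) (D (e 1)) = 0 := by
        funext i; simp [br, e, Pi.single_apply]
      have c0' : D (Pi.single 0 1) 0 = 0 := c0
      have c1' : D (Pi.single 0 1) 1 = 0 := c1
      have hb' : br (e 1) (D (e 0)) = 0 := by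
        funext i; simp [br, e, Pi.single_apply, c0', c1']
      rw [hb, hb']; abel
    exact ⟨c0, c1, hDe2, hDe3⟩
  · rintro ⟨c0, c1, h2, h3⟩ x y
    have hv1 : ∀ v : V, D v 1 = v 1 * D (e 1) 1 := by
      intro v
      conv_lhs => rw [decompV v]
      simp [h2, h3, c1]
    have hv0 : ∀ v : V, D v 0 = v 1 * D (e 1) 0 := by
      intro v
      conv_lhs => rw [decompV v]
      simp [h2, h3, c0]
    have hl : D (br x y) = 0 := by
      show D ((x 1 * y 1) • e 2 + (x 1 * y 0) • e 3) = 0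
      rw [map_add, map_smul, map_smul, h2, h3, smul_zero, smul_zero, add_zero]
    rw [hl]
    funext i
    simp only [br, Pi.sub_apply, Pi.add_apply, Pi.smul_apply, smul_eq_mul,
      hv1 x, hv0 x, hv1 y, hv0 y, Pi.zero_apply]
    ring

/-- The linear map recording the constrained data of `D`. -/
def Ψ : (V →ₗ[ℂ] V) →ₗ[ℂ] (ℂ × ℂ × V × V) where
  toFun D := (D (e 0) 0, D (e 0) 1, D (e 2), D (e 3))
  map_add' := by intros; simp
  map_smul' := by intros; simp

lemma Ψ_surj : Function.Surjective Ψ := by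
  rintro ⟨a, b, u, v⟩
  classical
  refine ⟨(Pi.basisFun ℂ (Fin 4)).constr ℂ ![a • e 0 + b • e 1, 0, u, v], ?_⟩
  have he : ∀ i : Fin 4, (Pi.basisFun ℂ (Fin 4)) i = e i := by
    intro i; funext j; simp [e, Pi.single_apply, Pi.basisFun_apply]
  have hD : ∀ i : Fin 4,
      ((Pi.basisFun ℂ (Fin 4)).constr ℂ ![a • e 0 + b • e 1, 0, u, v]) (e i)
        = ![a • e 0 + b • e 1, 0, u, v] i := by
    intro i
    rw [← he i]
    exact (Pi.basisFun ℂ (Fin 4)).constr_basis ℂ _ i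
  simp only [Ψ, LinearMap.coe_mk, AddHom.coe_mk]
  rw [hD 0, hD 2, hD 3]
  refine Prod.ext ?_ (Prod.ext ?_ (Prod.ext ?_ ?_)) <;>
    simp [e, Pi.single_apply]

/-- `D e₁ ∈ span{e₃,e₄}`, `D e₂` arbitrary, `D e₃ = D e₄ = 0`. -/
theorem antiderivations_of_L19 :
    (∀ D : V →ₗ[ℂ] V, IsAntiDer D ↔
      D (e 0) ∈ Submodule.span ℂ {e 2, e 3} ∧
      D (e 2) = 0 ∧ D (e 3) = 0) ∧
    ∃ S : Submodule ℂ (V →ₗ[ℂ] V),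
      (S : Set (V →ₗ[ℂ] V)) = {D | IsAntiDer D} ∧ Module.finrank ℂ S = 6 := by
  have hspan : ∀ w : V, w ∈ Submodule.span ℂ ({e 2, e 3} : Set V) ↔ (w 0 = 0 ∧ w 1 = 0) := by
    intro w
    constructor
    · intro hw
      rcases Submodule.mem_span_pair.1 hw with ⟨a, b, hab⟩
      constructor <;> (rw [← hab]; simp [e, Pi.single_apply])
    · rintro ⟨h0, h1⟩
      refine Submodule.mem_span_pair.2 ⟨w 2, w 3, ?_⟩
      funext i
      fin_cases i <;> simp [e, Pi.single_apply, h0, h1]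
  constructor
  · intro D
    rw [key D, hspan (D (e 0))]
    tauto
  · refine ⟨LinearMap.ker Ψ, ?_, ?_⟩
    · ext D
      simp only [SetLike.mem_coe, LinearMap.mem_ker, Set.mem_setOf_eq, key D]
      constructor
      · intro h
        have := congrArg Prod.fst h
        have h2 := congrArg (fun p => p.2.1) h
        have h3 := congrArg (fun p => p.2.2.1) h
        have h4 := congrArg (fun p => p.2.2.2) h
        exact ⟨this, h2, h3, h4⟩
      · rintro ⟨a, b, c, d⟩
        simp only [Ψ, LinearMap.coe_mk, AddHom.coe_mk, a, b, c, d]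
        rfl
    · have hr : LinearMap.range Ψ = ⊤ := LinearMap.range_eq_top.2 Ψ_surj
      have hsum := LinearMap.finrank_range_add_finrank_ker Ψ
      rw [hr] at hsum
      have h1 : Module.finrank ℂ (V →ₗ[ℂ] V) = 16 := by
        rw [Module.finrank_linearMap]
        simp [Module.finrank_pi]
      have h2 : Module.finrank ℂ (ℂ × ℂ × V × V) = 10 := by
        simp [Module.finrank_prod, Module.finrank_pi]
      rw [finrank_top, h1, h2] at hsum
      omega
end
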